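/- For formal power series: given β(g) = β₂g² + β₃g³ + O(g⁴) with β₂ ≠ 0, there exists a formal diffeomorphism φ(g) = g + O(g²) such that the pushed-forward series β̂ = φ_*β satisfies β̂(g) = β₂g² + β₃g³, i.e. β̂_r = 0 for all r ≥ 4. -/

import Mathlib

open scoped BigOperators

namespace BetaNormalForm

/-- Composition (substitution) of formal power series: `(f ∘ g)(z) = f(g(z))`, which is
well defined coefficientwise when `g` has vanishing constant term (then
`coeff n (g^k) = 0` for `k > n`, so each coefficient is the finite sum below). -/
noncomputable def comp (f g : PowerSeries ℝ) : PowerSeries ℝ :=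
  PowerSeries.mk fun n =>
    ∑ k ∈ Finset.range (n + 1), PowerSeries.coeff k f * PowerSeries.coeff n (g ^ k)

/-- coefficient of `X^n` in `(mk d)^2`. -/
def S2 (d : ℕ → ℝ) (n : ℕ) : ℝ := ∑ p ∈ Finset.range (n + 1), d p * d (n - p)

/-- coefficient of `X^n` in `(mk d)^3`. -/
def S3 (d : ℕ → ℝ) (n : ℕ) : ℝ := ∑ p ∈ Finset.range (n + 1), d p * S2 d (n - p)

/-- coefficient of `X^n` in `(mk d)' * β`, where `b` are the coefficients of `β`. -/
def Qd (b d : ℕ → ℝ) (n : ℕ) : ℝ :=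
  ∑ p ∈ Finset.range (n + 1), ((p : ℝ) + 1) * d (p + 1) * b (n - p)

/-- The defect of the normal-form equation at order `n`. -/
def Ee (b d : ℕ → ℝ) (n : ℕ) : ℝ := b 2 * S2 d n + b 3 * S3 d n - Qd b d n

/-- The coefficients of `φ`, defined by strong recursion. -/
noncomputable def cc (b : ℕ → ℝ) : ℕ → ℝ :=
  WellFounded.fix Nat.lt_wfRel.wf fun m ih =>
    if m = 1 then 1
    else if 3 ≤ m then
      Ee b (fun k => if h : k < m then ih k h else 0) (m + 1) / (((m : ℝ) - 2) * b 2)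
    else 0

/-- truncation of `cc` below `m`. -/
noncomputable def tr (b : ℕ → ℝ) (m : ℕ) : ℕ → ℝ := fun k => if k < m then cc b k else 0

lemma cc_eq (b : ℕ → ℝ) (m : ℕ) :
    cc b m = if m = 1 then 1
      else if 3 ≤ m then Ee b (tr b m) (m + 1) / (((m : ℝ) - 2) * b 2) else 0 := by
  unfold tr
  conv_lhs => rw [cc, WellFounded.fix_eq]
  simp only [dite_eq_ite]
  rfl

lemma cc_zero (b : ℕ → ℝ) : cc b 0 = 0 := by rw [cc_eq]; norm_num
lemma cc_one (b : ℕ → ℝ) : cc b 1 = 1 := by rw [cc_eq]; norm_num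
lemma cc_two (b : ℕ → ℝ) : cc b 2 = 0 := by rw [cc_eq]; norm_num
lemma cc_rec (b : ℕ → ℝ) (m : ℕ) (hm : 3 ≤ m) :
    cc b m = Ee b (tr b m) (m + 1) / (((m : ℝ) - 2) * b 2) := by
  rw [cc_eq]
  have h1 : m ≠ 1 := by omega
  simp [h1, hm]

lemma tr_zero (b : ℕ → ℝ) (m : ℕ) : tr b m 0 = 0 := by
  unfold tr; split <;> simp [cc_zero]

lemma tr_lt (b : ℕ → ℝ) {m k : ℕ} (h : k < m) : tr b m k = cc b k := by
  unfold tr; simp [h]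

lemma tr_ge (b : ℕ → ℝ) {m k : ℕ} (h : m ≤ k) : tr b m k = 0 := by
  unfold tr; simp [Nat.not_lt.mpr h]

/-- `S2` only depends on coefficients below `m` (for `q ≤ m`), given that `d 0 = 0`. -/
lemma S2_tr (b : ℕ → ℝ) {m q : ℕ} (hq : q ≤ m) : S2 (cc b) q = S2 (tr b m) q := by
  unfold S2
  refine Finset.sum_congr rfl fun i hi => ?_
  rw [Finset.mem_range] at hi
  rcases eq_or_ne i 0 with rfl | hi0
  · simp [cc_zero, tr_zero]
  rcases eq_or_ne i q with rfl | hiq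
  · simp [cc_zero, tr_zero]
  · have h1 : i < m := by omega
    have h2 : q - i < m := by omega
    rw [tr_lt b h1, tr_lt b h2]

lemma S2_zero (d : ℕ → ℝ) (h : d 0 = 0) : S2 d 0 = 0 := by
  simp [S2, h]

lemma S2_one (d : ℕ → ℝ) (h : d 0 = 0) : S2 d 1 = 0 := by
  simp [S2, Finset.sum_range_succ, h]

lemma S3_tr (b : ℕ → ℝ) {m : ℕ} (hm : 1 ≤ m) : S3 (cc b) (m + 1) = S3 (tr b m) (m + 1) := by
  unfold S3
  refine Finset.sum_congr rfl fun i hi => ?_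
  rw [Finset.mem_range] at hi
  rcases eq_or_ne i 0 with rfl | hi0
  · simp [cc_zero, tr_zero]
  rcases eq_or_ne i (m + 1) with hitop | hitop
  · rw [hitop]
    have e : m + 1 - (m + 1) = 0 := by omega
    rw [e, S2_zero _ (cc_zero b), S2_zero _ (tr_zero b m)]
    ring
  rcases eq_or_ne i m with him | him
  · rw [him]
    have e : m + 1 - m = 1 := by omega
    rw [e, S2_one _ (cc_zero b), S2_one _ (tr_zero b m)]
    ring
  · have h1 : i < m := by omega
    have h2 : m + 1 - i ≤ m := by omega
    rw [tr_lt b h1, ← S2_tr b h2]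

lemma S2_split (b : ℕ → ℝ) {m : ℕ} (hm : 2 ≤ m) :
    S2 (cc b) (m + 1) = S2 (tr b m) (m + 1) + 2 * cc b m := by
  have key : S2 (cc b) (m + 1) - S2 (tr b m) (m + 1)
      = ∑ p ∈ Finset.range (m + 2),
          (cc b p * cc b (m + 1 - p) - tr b m p * tr b m (m + 1 - p)) := by
    rw [Finset.sum_sub_distrib]; rfl
  have hsub : ({1, m} : Finset ℕ) ⊆ Finset.range (m + 2) := by
    intro x hx
    simp only [Finset.mem_insert, Finset.mem_singleton] at hx
    rcases hx with rfl | rfl <;> simp <;> omega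
  have hvanish : ∀ x ∈ Finset.range (m + 2), x ∉ ({1, m} : Finset ℕ) →
      cc b x * cc b (m + 1 - x) - tr b m x * tr b m (m + 1 - x) = 0 := by
    intro x hx hx'
    rw [Finset.mem_range] at hx
    simp only [Finset.mem_insert, Finset.mem_singleton, not_or] at hx'
    rcases eq_or_ne x 0 with rfl | hx0
    · simp [cc_zero, tr_zero]
    rcases eq_or_ne x (m + 1) with rfl | hxtop
    · have : m + 1 - (m + 1) = 0 := by omega
      rw [this]; simp [cc_zero, tr_zero]
    · have h1 : x < m := by omega
      have h2 : m + 1 - x < m := by omega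
      rw [tr_lt b h1, tr_lt b h2]; ring
  have h1m : (1 : ℕ) ≠ m := by omega
  have hpair := Finset.sum_pair (f := fun p =>
    cc b p * cc b (m + 1 - p) - tr b m p * tr b m (m + 1 - p)) h1m
  have diff : S2 (cc b) (m + 1) - S2 (tr b m) (m + 1) = 2 * cc b m := by
    rw [key, ← Finset.sum_subset hsub hvanish, hpair]
    have e1 : m + 1 - 1 = m := by omega
    have e2 : m + 1 - m = 1 := by omega
    simp only [e1, e2, cc_one, tr_ge b (le_refl m), tr_lt b (by omega : 1 < m)]
    ring
  linarith

lemma Qd_split (b : ℕ → ℝ) (hb0 : b 0 = 0) (hb1 : b 1 = 0) {m : ℕ} (hm : 2 ≤ m) :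
    Qd b (cc b) (m + 1) = Qd b (tr b m) (m + 1) + (m : ℝ) * b 2 * cc b m := by
  have key : Qd b (cc b) (m + 1) - Qd b (tr b m) (m + 1)
      = ∑ p ∈ Finset.range (m + 2),
          (((p : ℝ) + 1) * cc b (p + 1) * b (m + 1 - p)
            - ((p : ℝ) + 1) * tr b m (p + 1) * b (m + 1 - p)) := by
    rw [Finset.sum_sub_distrib]; rfl
  have hmem : m - 1 ∈ Finset.range (m + 2) := by
    rw [Finset.mem_range]; omega
  set g : ℕ → ℝ := fun p => ((p : ℝ) + 1) * cc b (p + 1) * b (m + 1 - p)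
      - ((p : ℝ) + 1) * tr b m (p + 1) * b (m + 1 - p) with hg
  have hsingle : ∑ p ∈ Finset.range (m + 2), g p = g (m - 1) := by
    refine Finset.sum_eq_single_of_mem (m - 1) hmem ?_
    intro x hx hxne
    rw [Finset.mem_range] at hx
    rw [hg]
    rcases lt_or_ge x (m - 1) with h | h
    · have h1 : x + 1 < m := by omega
      simp only [tr_lt b h1]; ring
    · have h2 : m + 1 - x = 0 ∨ m + 1 - x = 1 := by omega
      rcases h2 with h2 | h2 <;> simp [h2, hb0, hb1]
  have hgval : g (m - 1) = (m : ℝ) * b 2 * cc b m := by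
    rw [hg]
    have e1 : m - 1 + 1 = m := by omega
    have e2 : m + 1 - (m - 1) = 2 := by omega
    have e3 : ((m - 1 : ℕ) : ℝ) = (m : ℝ) - 1 := by
      push_cast [Nat.cast_sub (by omega : 1 ≤ m)]; ring
    simp only [e1, e2, e3, tr_ge b (le_refl m)]
    ring
  have diff : Qd b (cc b) (m + 1) - Qd b (tr b m) (m + 1) = (m : ℝ) * b 2 * cc b m := by
    rw [key]
    exact hsingle.trans hgval
  linarith

lemma Ee_zero (b : ℕ → ℝ) (hb0 : b 0 = 0) (hb1 : b 1 = 0) (hb2 : b 2 ≠ 0) (n : ℕ) :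
    Ee b (cc b) n = 0 := by
  match n with
  | 0 => simp [Ee, S2, S3, Qd, Finset.sum_range_succ, cc_zero, cc_one, hb0]
  | 1 => simp [Ee, S2, S3, Qd, Finset.sum_range_succ, cc_zero, cc_one, hb0, hb1]
  | 2 =>
    simp only [Ee, S2, S3, Qd, Finset.sum_range_succ, Finset.sum_range_zero]
    norm_num [cc_zero, cc_one, cc_two, hb0, hb1]
  | 3 =>
    simp only [Ee, S2, S3, Qd, Finset.sum_range_succ, Finset.sum_range_zero]
    norm_num [cc_zero, cc_one, cc_two, hb0, hb1]
  | (k + 4) =>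
    set m := k + 3 with hmdef
    have hm3 : 3 ≤ m := by omega
    have hm2 : 2 ≤ m := by omega
    have hm1 : 1 ≤ m := by omega
    have hrec := cc_rec b m hm3
    have hS2 := S2_split b hm2
    have hS3 := S3_tr b hm1
    have hQ := Qd_split b hb0 hb1 hm2
    have hden : ((m : ℝ) - 2) * b 2 ≠ 0 := by
      apply mul_ne_zero _ hb2
      have : (3 : ℝ) ≤ (m : ℝ) := by exact_mod_cast hm3
      nlinarith
    have hcm : cc b m * (((m : ℝ) - 2) * b 2) = Ee b (tr b m) (m + 1) := by
      rw [hrec, div_mul_cancel₀ _ hden]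
    have goal_eq : k + 4 = m + 1 := by omega
    rw [goal_eq]
    unfold Ee at hcm ⊢
    rw [hS2, hS3, hQ]
    nlinarith [hcm]

lemma coeff_mk_sq (d : ℕ → ℝ) (n : ℕ) :
    PowerSeries.coeff n (PowerSeries.mk d ^ 2) = S2 d n := by
  rw [sq, PowerSeries.coeff_mul, Finset.Nat.sum_antidiagonal_eq_sum_range_succ_mk]
  simp [S2]

lemma coeff_mk_cube (d : ℕ → ℝ) (n : ℕ) :
    PowerSeries.coeff n (PowerSeries.mk d ^ 3) = S3 d n := by
  have h3 : (PowerSeries.mk d) ^ 3 = PowerSeries.mk d * (PowerSeries.mk d) ^ 2 := by ring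
  rw [h3, PowerSeries.coeff_mul, Finset.Nat.sum_antidiagonal_eq_sum_range_succ_mk]
  unfold S3
  refine Finset.sum_congr rfl fun i _ => ?_
  rw [PowerSeries.coeff_mk, coeff_mk_sq]

lemma coeff_deriv_mul (d : ℕ → ℝ) (β : PowerSeries ℝ) (n : ℕ) :
    PowerSeries.coeff n (PowerSeries.derivative ℝ (PowerSeries.mk d) * β)
      = Qd (fun q => PowerSeries.coeff q β) d n := by
  rw [PowerSeries.coeff_mul, Finset.Nat.sum_antidiagonal_eq_sum_range_succ_mk]
  unfold Qd
  refine Finset.sum_congr rfl fun i _ => ?_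
  rw [PowerSeries.coeff_derivative, PowerSeries.coeff_mk]
  push_cast
  ring

/-- Given a formal power series `β(g) = β₂g² + β₃g³ + O(g⁴)` with `β₂ ≠ 0`,
there exists a formal diffeomorphism `φ(g) = g + O(g²)` such that the pushed-forward
vector field `β̂ = φ_*β`, characterized by `β̂(φ(g)) = φ'(g)·β(g)`, is exactly
`β̂(g) = β₂g² + β₃g³`, i.e. `β̂_r = 0` for all `r ≥ 4`: only `β₂` and `β₃` are universal. -/
theorem beta_function_normal_form
    (β : PowerSeries ℝ)
    (h0 : PowerSeries.coeff 0 β = 0)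
    (h1 : PowerSeries.coeff 1 β = 0)
    (h2 : PowerSeries.coeff 2 β ≠ 0) :
    ∃ φ : PowerSeries ℝ,
      PowerSeries.coeff 0 φ = 0 ∧
      PowerSeries.coeff 1 φ = 1 ∧
      comp (PowerSeries.C (PowerSeries.coeff 2 β) * PowerSeries.X ^ 2 +
            PowerSeries.C (PowerSeries.coeff 3 β) * PowerSeries.X ^ 3) φ =
        (PowerSeries.derivative ℝ φ) * β := by
  set b : ℕ → ℝ := fun n => PowerSeries.coeff n β with hb
  refine ⟨PowerSeries.mk (cc b), by simp [cc_zero], by simp [cc_one], ?_⟩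
  ext n
  rw [comp, PowerSeries.coeff_mk, coeff_deriv_mul]
  have hf : ∀ k : ℕ, PowerSeries.coeff k
      (PowerSeries.C (PowerSeries.coeff 2 β) * PowerSeries.X ^ 2 +
        PowerSeries.C (PowerSeries.coeff 3 β) * PowerSeries.X ^ 3)
      = (if k = 2 then b 2 else 0) + (if k = 3 then b 3 else 0) := by
    intro k
    rw [map_add, PowerSeries.coeff_C_mul, PowerSeries.coeff_C_mul,
      PowerSeries.coeff_X_pow, PowerSeries.coeff_X_pow]
    simp [hb, mul_ite]
  have key : (∑ k ∈ Finset.range (n + 1),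
      PowerSeries.coeff k
        (PowerSeries.C (PowerSeries.coeff 2 β) * PowerSeries.X ^ 2 +
          PowerSeries.C (PowerSeries.coeff 3 β) * PowerSeries.X ^ 3)
        * PowerSeries.coeff n (PowerSeries.mk (cc b) ^ k))
      = b 2 * S2 (cc b) n + b 3 * S3 (cc b) n := by
    rcases le_or_gt 3 n with hn | hn
    · have hsub : ({2, 3} : Finset ℕ) ⊆ Finset.range (n + 1) := by
        intro x hx
        simp only [Finset.mem_insert, Finset.mem_singleton] at hx
        rcases hx with rfl | rfl <;> rw [Finset.mem_range] <;> omega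
      rw [← Finset.sum_subset hsub (by
        intro x _ hx'
        simp only [Finset.mem_insert, Finset.mem_singleton, not_or] at hx'
        rw [hf]
        simp [hx'.1, hx'.2])]
      rw [Finset.sum_pair (by omega : (2:ℕ) ≠ 3), hf, hf]
      simp [coeff_mk_sq, coeff_mk_cube]
    · interval_cases n
      · simp [hf, S2_zero _ (cc_zero b), S3, S2_zero _ (cc_zero b), cc_zero]
      · simp [Finset.sum_range_succ, hf, S2_one _ (cc_zero b), S3,
          Finset.sum_range_succ, S2_zero _ (cc_zero b), cc_zero]
      · have hS3 : S3 (cc b) 2 = 0 := by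
          simp [S3, Finset.sum_range_succ, S2_one _ (cc_zero b),
            S2_zero _ (cc_zero b), cc_zero]
        rw [Finset.sum_range_succ, Finset.sum_range_succ, Finset.sum_range_succ]
        rw [hf, hf, hf, hS3, coeff_mk_sq]
        norm_num
  rw [key]
  have := Ee_zero b h0 h1 h2 n
  unfold Ee at this
  linarith


end BetaNormalForm
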